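/- Fix β, δ ∈ [r] and ε > 0. No algorithm whose only access to the universe 𝒰 and to the agents' utility functions is via β-accurate discriminative queries and (1, δ, 1)-accurate generative queries can guarantee that its output slate satisfies (2β + δ − ε, 1)-costBJR, and none can guarantee (2β + δ − ε, 1)-cJR, even when all statements have unit cost (c(α) = 1 for all α ∈ 𝒰). -/

import Mathlib

/-!
Statement 2 (Theorem 3.3 of the paper): fix `β, δ ∈ [r]` and `ε > 0`. No algorithm
whose only access to the universe and the utilities is via `β`-accurate discriminative
queries and `(1, δ, 1)`-accurate generative queries can guarantee that its output slate
satisfies `(2β + δ − ε, 1)`-costBJR, and none can guarantee `(2β + δ − ε, 1)`-cJR, even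
when all statements have unit cost.

An algorithm is modelled as an adaptive query strategy: it may issue generative queries
(receiving a fresh statement, of which it learns the cost) and discriminative queries on
previously received statements (referenced by the index in which they were received),
and finally outputs a slate consisting of previously received statements.
-/

namespace GenSoc

open Finset

open scoped Classical

/-- `ceilDiv a b = ⌈a / b⌉` for natural numbers. -/
def ceilDiv (a b : ℕ) : ℕ := (a + b - 1) / b

/-- The number of agents in `S` that approve statement `α` at level `ℓ`. -/
noncomputable def supp {A U : Type} (u : A → U → ℕ) (α : U) (S : Finset A) (ℓ : ℕ) : ℕ :=
  (S.filter fun i => ℓ ≤ u i α).card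

/-- Total cost of a slate. -/
def cost {U : Type} (c : U → ℕ) (W : Finset U) : ℕ := ∑ α ∈ W, c α

/-- A discriminative query `Disc` is `β`-accurate w.r.t. the true utilities `u`. -/
def DiscAccurate {A U : Type} (u Disc : A → U → ℕ) (β : ℕ) : Prop :=
  ∀ i α, u i α - β ≤ Disc i α ∧ Disc i α ≤ u i α + β

/-- A generative query `Gen` is `(γ,δ,μ)`-accurate w.r.t. the true utilities `u`
and costs `c`, for utility levels in `[r]` and cost arguments in `[B]`. -/
def GenAccurate {A U : Type} (c : U → ℕ) (u : A → U → ℕ) (Gen : Finset A → ℕ → ℕ → U)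
    (r B : ℕ) (γ : ℝ) (δ : ℕ) (μ : ℝ) : Prop :=
  ∀ (S : Finset A) (ℓ x : ℕ), 1 ≤ ℓ → ℓ ≤ r → 1 ≤ x → x ≤ B →
    c (Gen S ℓ x) ≤ x ∧
    ∀ α : U, c α ≤ ⌈μ * (x : ℝ)⌉₊ →
      γ * (supp u α S ℓ : ℝ) ≤ (supp u (Gen S ℓ x) S (ℓ - δ) : ℝ)

/-- An assignment `ω` of agents to statements is balanced w.r.t. a slate `W`:
every `α ∈ W` is assigned exactly `⌊c(α)·n/B⌋` or `⌈c(α)·n/B⌉` agents. -/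
noncomputable def IsBalanced {A U : Type} [Fintype A] (c : U → ℕ) (B : ℕ)
    (ω : A → U) (W : Finset U) : Prop :=
  ∀ α ∈ W,
    (Finset.univ.filter fun i : A => ω i = α).card = c α * Fintype.card A / B ∨
    (Finset.univ.filter fun i : A => ω i = α).card = ceilDiv (c α * Fintype.card A) B

/-- `(b,d)`-costBJR: there is a balanced assignment `ω : N → W` such that no (nonempty)
coalition `S`, statement `α` and threshold `θ ∈ [r]` satisfy
(i) `|S| ≥ d·⌈c(α)·n/B⌉`, (ii) `u_i(α) ≥ θ` for all `i ∈ S`, and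
(iii) `u_i(ω(i)) < θ - b` for all `i ∈ S`. -/
noncomputable def CostBJR {A U : Type} [Fintype A] (c : U → ℕ) (u : A → U → ℕ)
    (r B : ℕ) (b d : ℝ) (W : Finset U) : Prop :=
  ∃ ω : A → U, (∀ i, ω i ∈ W) ∧ IsBalanced c B ω W ∧
    ¬ ∃ (S : Finset A) (α : U) (θ : ℕ), S.Nonempty ∧ 1 ≤ θ ∧ θ ≤ r ∧
      d * (ceilDiv (c α * Fintype.card A) B : ℝ) ≤ (S.card : ℝ) ∧
      (∀ i ∈ S, θ ≤ u i α) ∧ (∀ i ∈ S, (u i (ω i) : ℝ) + b < (θ : ℝ))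

/-- `(b,d)`-cJR: no (nonempty) coalition `S`, statement `α` and threshold `θ ∈ [r]`
satisfy (i) `|S| ≥ d·⌈c(α)·n/B⌉`, (ii) `u_i(α) ≥ θ` for all `i ∈ S`, and
(iii) `u_i(α') < θ - b` for all `α' ∈ W` and `i ∈ S`. -/
def CJR {A U : Type} [Fintype A] (c : U → ℕ) (u : A → U → ℕ)
    (r B : ℕ) (b d : ℝ) (W : Finset U) : Prop :=
  ¬ ∃ (S : Finset A) (α : U) (θ : ℕ), S.Nonempty ∧ 1 ≤ θ ∧ θ ≤ r ∧
      d * (ceilDiv (c α * Fintype.card A) B : ℝ) ≤ (S.card : ℝ) ∧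
      (∀ i ∈ S, θ ≤ u i α) ∧ (∀ α' ∈ W, ∀ i ∈ S, (u i α' : ℝ) + b < (θ : ℝ))

/-- An adaptive algorithm for `n` agents, whose only access to the universe and the
utilities is via the queries. It can issue a generative query (learning the cost of
the returned statement before continuing), issue a discriminative query for an agent
and a previously received statement (referenced by the index in which it was received),
or stop and output a slate of previously received statements. -/
inductive Strategy (n : ℕ) : Type
  | output : List ℕ → Strategy n
  | genQ : Finset (Fin n) → ℕ → ℕ → (ℕ → Strategy n) → Strategy n
  | discQ : Fin n → ℕ → (ℕ → Strategy n) → Strategy n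

/-- Running a strategy against query implementations `Disc` and `Gen` (with cost
function `c`), given the list `seen` of statements received so far; returns the list
of statements forming the output slate. -/
noncomputable def runAux {n : ℕ} {U : Type} (c : U → ℕ)
    (Disc : Fin n → U → ℕ) (Gen : Finset (Fin n) → ℕ → ℕ → U) :
    Strategy n → List U → List U
  | .output idxs, seen => idxs.filterMap fun j => seen[j]?
  | .genQ S ℓ x k, seen => runAux c Disc Gen (k (c (Gen S ℓ x))) (seen ++ [Gen S ℓ x])
  | .discQ i j k, seen => runAux c Disc Gen (k ((seen[j]?).elim 0 (Disc i))) seen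

/-- The slate output by a strategy run against query implementations `Disc`, `Gen`. -/
noncomputable def runSlate {n : ℕ} {U : Type} (c : U → ℕ)
    (Disc : Fin n → U → ℕ) (Gen : Finset (Fin n) → ℕ → ℕ → U)
    (strat : Strategy n) : Finset U :=
  (runAux c Disc Gen strat []).toFinset


-- ===== auxiliary machinery for the proof =====

private lemma mem_runSlate {n : ℕ} {U : Type} (c : U → ℕ) (D : Fin n → U → ℕ)
    (G : Finset (Fin n) → ℕ → ℕ → U) (strat : Strategy n) (a : U) :
    a ∈ runSlate c D G strat ↔ a ∈ runAux c D G strat [] := by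
  rw [runSlate]
  exact List.mem_toFinset

private lemma runAux_pred {n : ℕ} {U : Type} (c : U → ℕ) (D : Fin n → U → ℕ)
    (G : Finset (Fin n) → ℕ → ℕ → U) (P : U → Prop)
    (hG : ∀ S ℓ x, P (G S ℓ x)) :
    ∀ (strat : Strategy n) (seen : List U), (∀ a ∈ seen, P a) →
      ∀ a ∈ runAux c D G strat seen, P a := by
  intro strat
  induction strat with
  | output idxs =>
      intro seen h a ha
      rw [runAux] at ha
      obtain ⟨j, _, hj⟩ := List.mem_filterMap.1 ha
      exact h a (List.mem_of_getElem? hj)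
  | genQ S ℓ x k ih =>
      intro seen h a ha
      rw [runAux] at ha
      refine ih _ _ ?_ a ha
      intro b hb
      rcases List.mem_append.1 hb with hb | hb
      · exact h b hb
      · rw [List.mem_singleton] at hb; subst hb; exact hG _ _ _
  | discQ i j k ih =>
      intro seen h a ha
      rw [runAux] at ha
      exact ih _ _ h a ha

private lemma runAux_congr {n : ℕ} {U : Type} (c : U → ℕ) (D1 D2 : Fin n → U → ℕ)
    (G : Finset (Fin n) → ℕ → ℕ → U) (P : U → Prop)
    (hG : ∀ S ℓ x, P (G S ℓ x)) (hD : ∀ i a, P a → D1 i a = D2 i a) :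
    ∀ (strat : Strategy n) (seen : List U), (∀ a ∈ seen, P a) →
      runAux c D1 G strat seen = runAux c D2 G strat seen := by
  intro strat
  induction strat with
  | output idxs => intro seen h; rw [runAux, runAux]
  | genQ S ℓ x k ih =>
      intro seen h
      rw [runAux, runAux]
      refine ih _ _ ?_
      intro b hb
      rcases List.mem_append.1 hb with hb | hb
      · exact h b hb
      · rw [List.mem_singleton] at hb; subst hb; exact hG _ _ _
  | discQ i j k ih =>
      intro seen h
      rw [runAux, runAux]
      have hval : (seen[j]?).elim 0 (D1 i) = (seen[j]?).elim 0 (D2 i) := by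
        cases hj : seen[j]? with
        | none => rfl
        | some a => simp only [Option.elim_some]; exact hD i a (h a (List.mem_of_getElem? hj))
      rw [hval]
      exact ih _ _ h


private lemma pick_avoid (C M : Finset (Fin 6)) (h : M.card < C.card) :
    ∃ a, a ∈ C ∧ a ∉ M := by
  by_contra hcon
  push_neg at hcon
  exact absurd (Finset.card_le_card fun a ha => hcon a ha) (by omega)

private lemma key1 (C M : Finset (Fin 6)) (hM : M.card ≤ 3) (hC : 4 ≤ C.card) :
    ∃ a b : Fin 6, a ∈ C ∧ b ∈ C ∧ a ≠ b ∧ a ∉ M := by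
  obtain ⟨a, haC, haM⟩ := pick_avoid C M (by omega)
  obtain ⟨b, hbC, hb⟩ := pick_avoid C {a} (by simp; omega)
  exact ⟨a, b, haC, hbC, fun h => hb (by simp [h]), haM⟩

private lemma key2 (C M N : Finset (Fin 6)) (hM : M.card ≤ 3) (hN : N.card ≤ 3)
    (hC : 5 ≤ C.card) :
    ∃ a b : Fin 6, a ∈ C ∧ b ∈ C ∧ a ≠ b ∧ a ∉ M ∧ b ∉ N := by
  obtain ⟨a, haC, haM⟩ := pick_avoid C M (by omega)
  have hcard : (N ∪ {a}).card ≤ 4 := le_trans (card_union_le _ _) (by simp; omega)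
  obtain ⟨b, hbC, hb⟩ := pick_avoid C (N ∪ {a}) (by omega)
  rw [Finset.mem_union, not_or, Finset.mem_singleton] at hb
  exact ⟨a, b, haC, hbC, fun h => hb.2 h.symm, haM, hb.1⟩

private lemma key3 (C M N P : Finset (Fin 6)) (hM : M.card ≤ 3) (hN : N.card ≤ 3)
    (hP : P.card ≤ 3) (hC : 6 ≤ C.card) :
    ∃ a b : Fin 6, a ∈ C ∧ b ∈ C ∧ a ≠ b ∧
      (a ∉ M ∨ b ∉ M) ∧ (a ∉ N ∨ b ∉ N) ∧ (a ∉ P ∨ b ∉ P) := by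
  have hCuniv : C = Finset.univ := by
    apply Finset.eq_univ_of_card
    have := Finset.card_le_univ C
    simp only [Fintype.card_fin] at this ⊢
    omega
  subst hCuniv
  by_cases hMN : ∃ a : Fin 6, a ∉ M ∧ a ∉ N
  · obtain ⟨a, haM, haN⟩ := hMN
    have hcard : (P ∪ {a}).card ≤ 4 := le_trans (card_union_le _ _) (by simp; omega)
    obtain ⟨b, hbC, hb⟩ := pick_avoid Finset.univ (P ∪ {a}) (by rw [Finset.card_univ, Fintype.card_fin]; omega)
    rw [Finset.mem_union, not_or, Finset.mem_singleton] at hb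
    exact ⟨a, b, Finset.mem_univ a, hbC, fun h => hb.2 h.symm,
      Or.inl haM, Or.inl haN, Or.inr hb.1⟩
  · push_neg at hMN
    have hun : M ∪ N = Finset.univ := by
      apply Finset.eq_univ_of_forall
      intro a
      rcases Classical.em (a ∈ M) with h | h
      · exact Finset.mem_union_left _ h
      · exact Finset.mem_union_right _ (hMN a h)
    have hcards : M.card = 3 ∧ N.card = 3 ∧ (M ∩ N).card = 0 := by
      have h1 := Finset.card_union_add_card_inter M N
      rw [hun] at h1
      simp only [Finset.card_univ, Fintype.card_fin] at h1
      omega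
    have hdisj : ∀ a : Fin 6, a ∈ M → a ∉ N := by
      intro a haM haN
      have : a ∈ M ∩ N := Finset.mem_inter.2 ⟨haM, haN⟩
      rw [Finset.card_eq_zero.1 hcards.2.2] at this
      exact absurd this (Finset.notMem_empty a)
    obtain ⟨a, haC, haP⟩ := pick_avoid Finset.univ P (by simp; omega)
    by_cases haM : a ∈ M
    · obtain ⟨b, hbC, hbM⟩ := pick_avoid Finset.univ M (by simp; omega)
      exact ⟨a, b, haC, hbC, fun h => hbM (h ▸ haM),
        Or.inr hbM, Or.inl (hdisj a haM), Or.inl haP⟩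
    · have hcard : (N ∪ {a}).card ≤ 4 := le_trans (card_union_le _ _) (by simp; omega)
      obtain ⟨b, hbC, hb⟩ := pick_avoid Finset.univ (N ∪ {a}) (by rw [Finset.card_univ, Fintype.card_fin]; omega)
      rw [Finset.mem_union, not_or, Finset.mem_singleton] at hb
      exact ⟨a, b, haC, hbC, fun h => hb.2 h.symm, Or.inl haM, Or.inr hb.1, Or.inl haP⟩

private lemma keyMain (A M N P : Finset (Fin 6)) (hM : M.card ≤ 3) (hN : N.card ≤ 3)
    (hP : P.card ≤ 3)
    (hrel : A.card + (if M = ∅ then 0 else 1) + (if N = ∅ then 0 else 1)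
      + (if P = ∅ then 0 else 1) ≤ 3) :
    ∃ a b : Fin 6, a ∉ A ∧ b ∉ A ∧ a ≠ b ∧
      (a ∉ M ∨ b ∉ M) ∧ (a ∉ N ∨ b ∉ N) ∧ (a ∉ P ∨ b ∉ P) := by
  have hCcard : (Aᶜ : Finset (Fin 6)).card = 6 - A.card := by
    rw [Finset.card_compl]; simp
  by_cases hm : M = ∅ <;> by_cases hn : N = ∅ <;> by_cases hp : P = ∅
  · -- all empty
    rw [if_pos hm, if_pos hn, if_pos hp] at hrel
    obtain ⟨a, ha, b, hb, hab⟩ := Finset.one_lt_card.1 (show 1 < (Aᶜ : Finset (Fin 6)).card by omega)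
    subst hm; subst hn; subst hp
    have haC := ha; have hbC := hb
    exact ⟨a, b, Finset.mem_compl.1 haC, Finset.mem_compl.1 hbC, hab,
      Or.inl (Finset.notMem_empty a), Or.inl (Finset.notMem_empty a),
      Or.inl (Finset.notMem_empty a)⟩
  · -- only P nonempty
    rw [if_pos hm, if_pos hn, if_neg hp] at hrel
    obtain ⟨a, b, haC, hbC, hab, haP⟩ := key1 Aᶜ P hP (by omega)
    subst hm; subst hn
    exact ⟨a, b, Finset.mem_compl.1 haC, Finset.mem_compl.1 hbC, hab,
      Or.inl (Finset.notMem_empty a), Or.inl (Finset.notMem_empty a), Or.inl haP⟩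
  · -- only N nonempty
    rw [if_pos hm, if_neg hn, if_pos hp] at hrel
    obtain ⟨a, b, haC, hbC, hab, haN⟩ := key1 Aᶜ N hN (by omega)
    subst hm; subst hp
    exact ⟨a, b, Finset.mem_compl.1 haC, Finset.mem_compl.1 hbC, hab,
      Or.inl (Finset.notMem_empty a), Or.inl haN, Or.inl (Finset.notMem_empty a)⟩
  · -- N P nonempty
    rw [if_pos hm, if_neg hn, if_neg hp] at hrel
    obtain ⟨a, b, haC, hbC, hab, haN, hbP⟩ := key2 Aᶜ N P hN hP (by omega)
    subst hm
    exact ⟨a, b, Finset.mem_compl.1 haC, Finset.mem_compl.1 hbC, hab,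
      Or.inl (Finset.notMem_empty a), Or.inl haN, Or.inr hbP⟩
  · -- only M nonempty
    rw [if_neg hm, if_pos hn, if_pos hp] at hrel
    obtain ⟨a, b, haC, hbC, hab, haM⟩ := key1 Aᶜ M hM (by omega)
    subst hn; subst hp
    exact ⟨a, b, Finset.mem_compl.1 haC, Finset.mem_compl.1 hbC, hab,
      Or.inl haM, Or.inl (Finset.notMem_empty a), Or.inl (Finset.notMem_empty a)⟩
  · -- M P nonempty
    rw [if_neg hm, if_pos hn, if_neg hp] at hrel
    obtain ⟨a, b, haC, hbC, hab, haM, hbP⟩ := key2 Aᶜ M P hM hP (by omega)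
    subst hn
    exact ⟨a, b, Finset.mem_compl.1 haC, Finset.mem_compl.1 hbC, hab,
      Or.inl haM, Or.inl (Finset.notMem_empty a), Or.inr hbP⟩
  · -- M N nonempty
    rw [if_neg hm, if_neg hn, if_pos hp] at hrel
    obtain ⟨a, b, haC, hbC, hab, haM, hbN⟩ := key2 Aᶜ M N hM hN (by omega)
    subst hp
    exact ⟨a, b, Finset.mem_compl.1 haC, Finset.mem_compl.1 hbC, hab,
      Or.inl haM, Or.inr hbN, Or.inl (Finset.notMem_empty a)⟩
  · -- all nonempty
    rw [if_neg hm, if_neg hn, if_neg hp] at hrel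
    obtain ⟨a, b, haC, hbC, hab, hc1, hc2, hc3⟩ := key3 Aᶜ M N P hM hN hP (by omega)
    exact ⟨a, b, Finset.mem_compl.1 haC, Finset.mem_compl.1 hbC, hab, hc1, hc2, hc3⟩


private def singPart (S : Finset (Fin 6)) : Finset (Fin 6) :=
  if S.card = 1 then S else ∅

private def medPart (S : Finset (Fin 6)) : Finset (Fin 6) :=
  if 2 ≤ S.card ∧ S.card ≤ 3 then S else ∅

private lemma idx_bound (S : Finset (Fin 6)) :
    (singPart S).card + (if medPart S = ∅ then 0 else 1) ≤ 1 := by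
  by_cases h : S.card = 1
  · have hm : medPart S = ∅ := by unfold medPart; rw [if_neg (by omega)]
    rw [hm, if_pos rfl, singPart, if_pos h, h]
  · have hs : singPart S = ∅ := by unfold singPart; rw [if_neg h]
    rw [hs, Finset.card_empty]
    split <;> omega

private lemma medPart_card (S : Finset (Fin 6)) : (medPart S).card ≤ 3 := by
  unfold medPart
  split
  · omega
  · simp

private lemma final_per (S : Finset (Fin 6)) (a b : Fin 6)
    (ha : a ∉ singPart S) (hb : b ∉ singPart S)
    (hM : a ∉ medPart S ∨ b ∉ medPart S) :
    2 * (S ∩ {a, b}).card ≤ S.card := by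
  by_cases h1 : S.card = 1
  · rw [singPart, if_pos h1] at ha hb
    have he : S ∩ {a, b} = ∅ := by
      ext x
      simp only [Finset.mem_inter, Finset.mem_insert, Finset.mem_singleton,
        Finset.notMem_empty, iff_false, not_and]
      rintro hx (rfl | rfl)
      · exact ha hx
      · exact hb hx
    rw [he]
    simp
  · by_cases h2 : 2 ≤ S.card ∧ S.card ≤ 3
    · rw [medPart, if_pos h2] at hM
      have hle : (S ∩ {a, b}).card ≤ 1 := by
        rcases hM with h | h
        · refine le_trans (Finset.card_le_card (fun x hx => ?_)) (Finset.card_singleton b).le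
          obtain ⟨hxS, hxab⟩ := Finset.mem_inter.1 hx
          rcases Finset.mem_insert.1 hxab with hxa | hxb
          · exact absurd (hxa ▸ hxS) h
          · exact hxb
        · refine le_trans (Finset.card_le_card (fun x hx => ?_)) (Finset.card_singleton a).le
          obtain ⟨hxS, hxab⟩ := Finset.mem_inter.1 hx
          rcases Finset.mem_insert.1 hxab with hxa | hxb
          · exact Finset.mem_singleton.2 hxa
          · exact absurd (Finset.mem_singleton.1 hxb ▸ hxS) h
      omega
    · have hle2 : (S ∩ {a, b}).card ≤ 2 := by
        refine le_trans (Finset.card_le_card Finset.inter_subset_right) ?_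
        exact le_trans (Finset.card_insert_le a {b}) (by simp)
      have : S.card = 0 ∨ 4 ≤ S.card := by omega
      rcases this with h | h
      · rw [Finset.card_eq_zero.1 h]
        simp
      · omega

private lemma exists_free_pair (S₁ S₂ S₃ : Finset (Fin 6)) :
    ∃ a b : Fin 6, a ≠ b ∧
      2 * (S₁ ∩ {a, b}).card ≤ S₁.card ∧
      2 * (S₂ ∩ {a, b}).card ≤ S₂.card ∧
      2 * (S₃ ∩ {a, b}).card ≤ S₃.card := by
  have h1 := idx_bound S₁
  have h2 := idx_bound S₂
  have h3 := idx_bound S₃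
  have hA : (singPart S₁ ∪ singPart S₂ ∪ singPart S₃).card ≤
      (singPart S₁).card + (singPart S₂).card + (singPart S₃).card :=
    le_trans (Finset.card_union_le _ _)
      (by have := Finset.card_union_le (singPart S₁) (singPart S₂); omega)
  obtain ⟨a, b, haA, hbA, hab, hm1, hm2, hm3⟩ :=
    keyMain (singPart S₁ ∪ singPart S₂ ∪ singPart S₃)
      (medPart S₁) (medPart S₂) (medPart S₃)
      (medPart_card S₁) (medPart_card S₂) (medPart_card S₃) (by omega)
  have notA : ∀ x : Fin 6, x ∉ singPart S₁ ∪ singPart S₂ ∪ singPart S₃ →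
      x ∉ singPart S₁ ∧ x ∉ singPart S₂ ∧ x ∉ singPart S₃ := by
    intro x hx
    simp only [Finset.mem_union, not_or] at hx
    exact ⟨hx.1.1, hx.1.2, hx.2⟩
  obtain ⟨ha1, ha2, ha3⟩ := notA a haA
  obtain ⟨hb1, hb2, hb3⟩ := notA b hbA
  exact ⟨a, b, hab, final_per S₁ a b ha1 hb1 hm1, final_per S₂ a b ha2 hb2 hm2,
    final_per S₃ a b ha3 hb3 hm3⟩



private lemma cover3 {γ : Type} [DecidableEq γ] (s : Finset γ) (h : s.card ≤ 3) (d : γ) :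
    ∃ x y z : γ, ∀ a ∈ s, a = x ∨ a = y ∨ a = z := by
  refine ⟨s.toList.getD 0 d, s.toList.getD 1 d, s.toList.getD 2 d, ?_⟩
  intro a ha
  rw [← Finset.mem_toList] at ha
  obtain ⟨⟨k, hk⟩, hke⟩ := List.mem_iff_get.1 ha
  have hlen : s.toList.length = s.card := Finset.length_toList s
  have he : ∀ m (hm : m < s.toList.length), s.toList.getD m d = s.toList.get ⟨m, hm⟩ := by
    intro m hm
    rw [List.getD_eq_getElem?_getD, List.getElem?_eq_getElem hm]
    rfl
  have hk3 : k < 3 := by omega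
  interval_cases k
  · exact Or.inl (hke ▸ (he 0 hk).symm)
  · exact Or.inr (Or.inl (hke ▸ (he 1 hk).symm))
  · exact Or.inr (Or.inr (hke ▸ (he 2 hk).symm))


private def cF : Option (Finset (Fin 6)) → ℕ := fun _ => 1

private def genF : Finset (Fin 6) → ℕ → ℕ → Option (Finset (Fin 6)) := fun S _ _ => some S

private def SerLB (T S : Finset (Fin 6)) : Finset (Fin 6) :=
  if 2 * (S ∩ T).card ≤ S.card then S \ T else S ∩ T

private def uLB (β δ : ℕ) (T : Finset (Fin 6)) (i : Fin 6) :
    Option (Finset (Fin 6)) → ℕ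
  | none => if i ∈ T then 2 * β + δ + 1 else 1
  | some S => if i ∈ SerLB T S then 2 * β + 1 else 1

private def dLB (β δ : ℕ) (T : Finset (Fin 6)) (i : Fin 6) :
    Option (Finset (Fin 6)) → ℕ
  | none => if i ∈ T then 2 * β + δ + 1 else 1
  | some _ => β + 1

private lemma serLB_subset (T S : Finset (Fin 6)) : SerLB T S ⊆ S := by
  unfold SerLB
  split
  · exact Finset.sdiff_subset
  · exact Finset.inter_subset_left

private lemma inter_le_serLB (T S : Finset (Fin 6)) :
    (S ∩ T).card ≤ (SerLB T S).card := by
  unfold SerLB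
  have h := Finset.card_sdiff_add_card_inter S T
  split
  · omega
  · exact le_refl _

private lemma sdiff_le_serLB (T S : Finset (Fin 6)) :
    (S \ T).card ≤ (SerLB T S).card := by
  unfold SerLB
  have h := Finset.card_sdiff_add_card_inter S T
  split
  · exact le_refl _
  · omega

private lemma uLB_pos (β δ : ℕ) (T : Finset (Fin 6)) (i : Fin 6)
    (α : Option (Finset (Fin 6))) : 1 ≤ uLB β δ T i α := by
  match α with
  | none => simp only [uLB]; split <;> omega
  | some S => simp only [uLB]; split <;> omega

private lemma uLB_le (β δ : ℕ) (T : Finset (Fin 6)) (i : Fin 6)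
    (α : Option (Finset (Fin 6))) : uLB β δ T i α ≤ 2 * β + δ + 1 := by
  match α with
  | none => simp only [uLB]; split <;> omega
  | some S => simp only [uLB]; split <;> omega

private lemma discAcc (β δ : ℕ) (T : Finset (Fin 6)) :
    DiscAccurate (uLB β δ T) (dLB β δ T) β := by
  intro i α
  match α with
  | none =>
      show (if i ∈ T then 2*β+δ+1 else 1) - β ≤ (if i ∈ T then 2*β+δ+1 else 1) ∧
        (if i ∈ T then 2*β+δ+1 else 1) ≤ (if i ∈ T then 2*β+δ+1 else 1) + β
      constructor
      · exact Nat.sub_le _ _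
      · exact Nat.le_add_right _ _
  | some S =>
      show (if i ∈ SerLB T S then 2*β+1 else 1) - β ≤ β + 1 ∧
        β + 1 ≤ (if i ∈ SerLB T S then 2*β+1 else 1) + β
      split <;> omega

private lemma genAcc (β δ : ℕ) (T : Finset (Fin 6)) :
    GenAccurate cF (uLB β δ T) genF (2 * β + δ + 1) 3 1 δ 1 := by
  intro S ℓ x hℓ1 hℓr hx1 hx3
  refine ⟨hx1, ?_⟩
  intro α _
  rw [one_mul, Nat.cast_le]
  show supp (uLB β δ T) α S ℓ ≤ supp (uLB β δ T) (some S) S (ℓ - δ)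
  by_cases hsmall : ℓ - δ ≤ 1
  · have hfull : supp (uLB β δ T) (some S) S (ℓ - δ) = S.card := by
      unfold supp
      rw [Finset.filter_true_of_mem (fun i _ => by
        have := uLB_pos β δ T i (some S); omega)]
    rw [hfull]
    exact Finset.card_filter_le _ _
  · have h2 : 2 ≤ ℓ := by omega
    have hser : (SerLB T S).card ≤ supp (uLB β δ T) (some S) S (ℓ - δ) := by
      unfold supp
      apply Finset.card_le_card
      intro i hi
      refine Finset.mem_filter.2 ⟨serLB_subset T S hi, ?_⟩
      have hv : uLB β δ T i (some S) = 2 * β + 1 := by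
        simp only [uLB]; rw [if_pos hi]
      omega
    refine le_trans ?_ hser
    match α with
    | none =>
        have hsub : (S.filter fun i => ℓ ≤ uLB β δ T i none) ⊆ S ∩ T := by
          intro i hi
          obtain ⟨hiS, hℓu⟩ := Finset.mem_filter.1 hi
          by_cases hiT : i ∈ T
          · exact Finset.mem_inter.2 ⟨hiS, hiT⟩
          · exfalso
            have hv : uLB β δ T i none = 1 := by simp only [uLB]; rw [if_neg hiT]
            omega
        exact le_trans (Finset.card_le_card hsub) (inter_le_serLB T S)
    | some S' =>
        by_cases hbig : 2 * β + 1 < ℓ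
        · have hempty : (S.filter fun i => ℓ ≤ uLB β δ T i (some S')) = ∅ := by
            rw [Finset.filter_eq_empty_iff]
            intro i _
            have hv : uLB β δ T i (some S') ≤ 2 * β + 1 := by
              simp only [uLB]; split <;> omega
            omega
          show (S.filter fun i => ℓ ≤ uLB β δ T i (some S')).card ≤ _
          rw [hempty]
          simp
        · push_neg at hbig
          have hsub : (S.filter fun i => ℓ ≤ uLB β δ T i (some S')) ⊆ S ∩ SerLB T S' := by
            intro i hi
            obtain ⟨hiS, hℓu⟩ := Finset.mem_filter.1 hi
            by_cases hiSer : i ∈ SerLB T S'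
            · exact Finset.mem_inter.2 ⟨hiS, hiSer⟩
            · exfalso
              have hv : uLB β δ T i (some S') = 1 := by simp only [uLB]; rw [if_neg hiSer]
              omega
          refine le_trans (Finset.card_le_card hsub) ?_
          by_cases hlight : 2 * (S' ∩ T).card ≤ S'.card
          · have hS' : SerLB T S' = S' \ T := by unfold SerLB; rw [if_pos hlight]
            rw [hS']
            refine le_trans (Finset.card_le_card ?_) (sdiff_le_serLB T S)
            intro i hi
            obtain ⟨hiS, hid⟩ := Finset.mem_inter.1 hi
            exact Finset.mem_sdiff.2 ⟨hiS, (Finset.mem_sdiff.1 hid).2⟩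
          · have hS' : SerLB T S' = S' ∩ T := by unfold SerLB; rw [if_neg hlight]
            rw [hS']
            refine le_trans (Finset.card_le_card ?_) (inter_le_serLB T S)
            intro i hi
            obtain ⟨hiS, hid⟩ := Finset.mem_inter.1 hi
            exact Finset.mem_inter.2 ⟨hiS, (Finset.mem_inter.1 hid).2⟩


/-- Theorem 3.3: for every algorithm (given by a strategy for every
instance size `n`, budget `B` and number of utility levels `r`) there is an instance
with unit costs, `β-accurate` discriminative queries and `(1,δ,1)`-accurate generative
queries on which the output slate fails `(2β + δ − ε, 1)`-costBJR and fails
`(2β + δ − ε, 1)`-cJR (or exceeds the budget). -/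
theorem no_algorithm_guarantees_beating_utility_errors
    (β δ : ℕ) (hβ : 1 ≤ β) (hδ : 1 ≤ δ) (ε : ℝ) (hε : 0 < ε)
    (Alg : (n : ℕ) → (B : ℕ) → (r : ℕ) → Strategy n) :
    ∃ (n : ℕ) (U : Type) (c : U → ℕ) (u : Fin n → U → ℕ)
      (Disc : Fin n → U → ℕ) (Gen : Finset (Fin n) → ℕ → ℕ → U) (B r : ℕ),
      0 < B ∧ β ≤ r ∧ δ ≤ r ∧
      (∀ i α, 1 ≤ u i α ∧ u i α ≤ r) ∧
      (∀ α : U, c α = 1) ∧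
      DiscAccurate u Disc β ∧
      GenAccurate c u Gen r B 1 δ 1 ∧
      ¬ (cost c (runSlate c Disc Gen (Alg n B r)) ≤ B ∧
          CostBJR c u r B (((2 * β + δ : ℕ) : ℝ) - ε) 1
            (runSlate c Disc Gen (Alg n B r))) ∧
      ¬ (cost c (runSlate c Disc Gen (Alg n B r)) ≤ B ∧
          CJR c u r B (((2 * β + δ : ℕ) : ℝ) - ε) 1
            (runSlate c Disc Gen (Alg n B r))) := by
  classical
  set r : ℕ := 2 * β + δ + 1 with hrdef
  set strat : Strategy 6 := Alg 6 3 r with hstrat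
  set W : Finset (Option (Finset (Fin 6))) := runSlate cF (dLB β δ ∅) genF strat with hWdef
  have hWsome : ∀ a ∈ W, a ≠ none := by
    intro a ha
    rw [hWdef, mem_runSlate] at ha
    exact runAux_pred cF (dLB β δ ∅) genF (fun a => a ≠ none)
      (fun S ℓ x => by simp [genF]) strat [] (by simp) a ha
  obtain ⟨T, hT2, hTlight⟩ : ∃ T : Finset (Fin 6), T.card = 2 ∧
      (cost cF W ≤ 3 → ∀ S : Finset (Fin 6), some S ∈ W → 2 * (S ∩ T).card ≤ S.card) := by
    by_cases hcost : cost cF W ≤ 3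
    · have hWcard : W.card ≤ 3 := by
        have hc : cost cF W = W.card := by
          simp [cost, cF]
        omega
      have hWS3 : ((Finset.univ : Finset (Finset (Fin 6))).filter
          (fun S => some S ∈ W)).card ≤ 3 := by
        refine le_trans (Finset.card_le_card_of_injOn (fun S => some S) ?_ ?_) hWcard
        · intro S hS
          exact (Finset.mem_filter.1 hS).2
        · intro x _ y _ h
          exact Option.some.inj h
      obtain ⟨S₁, S₂, S₃, hcover⟩ := cover3 _ hWS3 (∅ : Finset (Fin 6))
      obtain ⟨a, b, hab, h1, h2, h3⟩ := exists_free_pair S₁ S₂ S₃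
      refine ⟨{a, b}, ?_, ?_⟩
      · rw [Finset.card_insert_of_notMem (by simp [hab]), Finset.card_singleton]
      · intro _ S hS
        rcases hcover S (Finset.mem_filter.2 ⟨Finset.mem_univ _, hS⟩) with rfl | rfl | rfl
        · exact h1
        · exact h2
        · exact h3
    · exact ⟨{0, 1}, by decide, fun h => absurd h hcost⟩
  have hrun : runSlate cF (dLB β δ T) genF strat = W := by
    rw [hWdef]
    apply Finset.ext
    intro a
    rw [mem_runSlate, mem_runSlate]
    rw [runAux_congr cF (dLB β δ T) (dLB β δ ∅) genF (fun a => a ≠ none)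
      (fun S ℓ x => by simp [genF])
      (fun i a ha => by
        cases a with
        | none => exact absurd rfl ha
        | some s => rfl) strat [] (by simp)]
  have hq : ceilDiv (cF none * Fintype.card (Fin 6)) 3 = 2 := by
    simp [ceilDiv, cF]
  have hval : ∀ (ωi : Option (Finset (Fin 6))), ωi ∈ W → cost cF W ≤ 3 →
      ∀ i ∈ T, uLB β δ T i ωi = 1 := by
    intro ωi hωi hc i hi
    cases hω : ωi with
    | none => exact absurd (hω ▸ hωi) (fun h => hWsome none h rfl)
    | some S =>
        have hlight := hTlight hc S (hω ▸ hωi)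
        have hser : SerLB T S = S \ T := by
          unfold SerLB
          rw [if_pos hlight]
        simp only [uLB, hser]
        rw [if_neg (fun hmem => (Finset.mem_sdiff.1 hmem).2 hi)]
  have hviol : ∀ (v : ℕ), v = 1 → (v : ℝ) + (((2 * β + δ : ℕ) : ℝ) - ε) < (r : ℝ) := by
    intro v hv
    subst hv
    rw [hrdef]
    push_cast
    linarith
  refine ⟨6, Option (Finset (Fin 6)), cF, uLB β δ T, dLB β δ T, genF, 3, r,
    by norm_num, by omega, by omega,
    fun i α => ⟨uLB_pos β δ T i α, uLB_le β δ T i α⟩,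
    fun α => rfl, discAcc β δ T, genAcc β δ T, ?_, ?_⟩
  · rintro ⟨hc, hBJR⟩
    rw [hrun] at hc hBJR
    obtain ⟨ω, hωW, hbal, hno⟩ := hBJR
    apply hno
    refine ⟨T, none, r, Finset.card_pos.1 (by omega), by omega, le_refl r, ?_, ?_, ?_⟩
    · rw [hq, hT2]
      norm_num
    · intro i hi
      simp only [uLB]
      rw [if_pos hi]
    · intro i hi
      rw [hval (ω i) (hωW i) hc i hi]
      exact hviol 1 rfl
  · rintro ⟨hc, hCJR⟩
    rw [hrun] at hc hCJR
    apply hCJR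
    refine ⟨T, none, r, Finset.card_pos.1 (by omega), by omega, le_refl r, ?_, ?_, ?_⟩
    · rw [hq, hT2]
      norm_num
    · intro i hi
      simp only [uLB]
      rw [if_pos hi]
    · intro α' hα' i hi
      rw [hval α' hα' hc i hi]
      exact hviol 1 rfl


end GenSoc
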